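/- In the coloring of Construction: with X, Y partitioned into four parts of size (m+n-1)/4 each as described, the largest red connected matching has size exactly (m+n-1)/2, and the largest blue connected matching has size exactly (m+n-1)/4. -/

import Mathlib

open SimpleGraph Set

/-- A connected `k`-matching in a graph `H`: a matching of `k` edges all of whose
vertices lie in a single connected component of `H`. -/
def ConnMatching {V : Type*} [Fintype V] (H : SimpleGraph V) (k : ℕ) : Prop :=
  ∃ M : H.Subgraph, M.IsMatching ∧ M.edgeSet.ncard = k ∧
    ∃ c : H.ConnectedComponent, ∀ v ∈ M.verts, H.connectedComponentMk v = c

private lemma sigma_const {V β : Type*} (H : SimpleGraph V) (σ : V → β)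
    (hσ : ∀ a b, H.Adj a b → σ a = σ b) {a b : V} (h : H.Reachable a b) : σ a = σ b := by
  obtain ⟨p⟩ := h
  induction p with
  | nil => rfl
  | cons h p ih => exact (hσ _ _ h).trans ih

private lemma matching_le {α β : Type*} [Nonempty α] {H : SimpleGraph (α ⊕ β)}
    (M : H.Subgraph) (hM : M.IsMatching)
    (hcross : ∀ a b, H.Adj a b → ∃ x y, (a = Sum.inl x ∧ b = Sum.inr y) ∨
      (a = Sum.inr y ∧ b = Sum.inl x))
    (T : Set α) (hT : T.Finite)
    (hedge : ∀ x y, M.Adj (Sum.inl x) (Sum.inr y) → x ∈ T) :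
    M.edgeSet.ncard ≤ T.ncard := by
  classical
  have hdec : ∀ e ∈ M.edgeSet, ∃ x y, e = s(Sum.inl x, Sum.inr y) ∧
      M.Adj (Sum.inl x) (Sum.inr y) := by
    intro e he
    induction e using Sym2.ind with
    | _ a b =>
      rw [SimpleGraph.Subgraph.mem_edgeSet] at he
      obtain ⟨x, y, hxy | hxy⟩ := hcross a b (M.adj_sub he)
      · exact ⟨x, y, by rw [hxy.1, hxy.2], by rwa [hxy.1, hxy.2] at he⟩
      · refine ⟨x, y, ?_, ?_⟩
        · rw [hxy.1, hxy.2]; exact Sym2.eq_swap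
        · rw [hxy.1, hxy.2] at he; exact he.symm
  set f : Sym2 (α ⊕ β) → α := fun e =>
    if h : ∃ x, Sum.inl x ∈ e then h.choose else Classical.arbitrary α with hf
  have hfval : ∀ (x : α) (y : β), f s(Sum.inl x, Sum.inr y) = x := by
    intro x y
    have hex : ∃ z, Sum.inl z ∈ (s(Sum.inl x, Sum.inr y) : Sym2 (α ⊕ β)) :=
      ⟨x, by simp⟩
    rw [hf]; simp only [hex, dif_pos]
    have := hex.choose_spec
    rw [Sym2.mem_iff] at this
    rcases this with h | h
    · exact Sum.inl.inj h
    · exact absurd h (by simp)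
  apply Set.ncard_le_ncard_of_injOn f _ _ hT
  · intro e he
    obtain ⟨x, y, rfl, hadj⟩ := hdec e he
    rw [hfval]
    exact hedge x y hadj
  · intro e he e' he' hfe
    obtain ⟨x, y, rfl, hadj⟩ := hdec e he
    obtain ⟨x', y', rfl, hadj'⟩ := hdec e' he'
    rw [hfval, hfval] at hfe
    subst hfe
    have hv : Sum.inl x ∈ M.verts := M.edge_vert hadj
    have := (hM hv).unique hadj hadj'
    rw [Sum.inr.inj this]

private lemma connMatching_of {V : Type*} [Fintype V] {H : SimpleGraph V} {k : ℕ} (hk : 0 < k)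
    (p : Fin k → V × V) (hadj : ∀ i, H.Adj (p i).1 (p i).2)
    (hdisj : ∀ i j, i ≠ j → (p i).1 ≠ (p j).1 ∧ (p i).1 ≠ (p j).2 ∧ (p i).2 ≠ (p j).1 ∧
      (p i).2 ≠ (p j).2)
    (hconn : ∀ i j, H.Reachable (p i).1 (p j).1) : ConnMatching H k := by
  classical
  refine ⟨{ verts := (Set.range fun i => (p i).1) ∪ (Set.range fun i => (p i).2)
            Adj := fun a b => ∃ i, (a = (p i).1 ∧ b = (p i).2) ∨ (a = (p i).2 ∧ b = (p i).1)
            adj_sub := by rintro a b ⟨i, ⟨rfl, rfl⟩ | ⟨rfl, rfl⟩⟩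
                          exacts [hadj i, (hadj i).symm]
            edge_vert := by rintro a b ⟨i, ⟨rfl, _⟩ | ⟨rfl, _⟩⟩
                            · exact Or.inl ⟨i, rfl⟩
                            · exact Or.inr ⟨i, rfl⟩
            symm := by refine ⟨?_⟩; rintro a b ⟨i, ⟨rfl, rfl⟩ | ⟨rfl, rfl⟩⟩
                       · exact ⟨i, Or.inr ⟨rfl, rfl⟩⟩
                       · exact ⟨i, Or.inl ⟨rfl, rfl⟩⟩ }, ?_, ?_, ?_⟩
  · rintro v (⟨i, rfl⟩ | ⟨i, rfl⟩)
    · refine ⟨(p i).2, ⟨i, Or.inl ⟨rfl, rfl⟩⟩, ?_⟩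
      rintro w ⟨j, ⟨h1, rfl⟩ | ⟨h1, rfl⟩⟩
      · by_cases hij : i = j
        · rw [hij]
        · exact absurd h1 (hdisj i j hij).1
      · by_cases hij : i = j
        · subst hij; exact absurd h1 (hadj i).ne
        · exact absurd h1 (hdisj i j hij).2.1
    · refine ⟨(p i).1, ⟨i, Or.inr ⟨rfl, rfl⟩⟩, ?_⟩
      rintro w ⟨j, ⟨h1, rfl⟩ | ⟨h1, rfl⟩⟩
      · by_cases hij : i = j
        · subst hij; exact absurd h1.symm (hadj i).ne
        · exact absurd h1 (hdisj i j hij).2.2.1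
      · by_cases hij : i = j
        · rw [hij]
        · exact absurd h1 (hdisj i j hij).2.2.2
  · have hset : SimpleGraph.Subgraph.edgeSet
        { verts := (Set.range fun i => (p i).1) ∪ (Set.range fun i => (p i).2)
          Adj := fun a b => ∃ i, (a = (p i).1 ∧ b = (p i).2) ∨ (a = (p i).2 ∧ b = (p i).1)
          adj_sub := by rintro a b ⟨i, ⟨rfl, rfl⟩ | ⟨rfl, rfl⟩⟩
                        exacts [hadj i, (hadj i).symm]
          edge_vert := by rintro a b ⟨i, ⟨rfl, _⟩ | ⟨rfl, _⟩⟩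
                          · exact Or.inl ⟨i, rfl⟩
                          · exact Or.inr ⟨i, rfl⟩
          symm := by refine ⟨?_⟩; rintro a b ⟨i, ⟨rfl, rfl⟩ | ⟨rfl, rfl⟩⟩
                     · exact ⟨i, Or.inr ⟨rfl, rfl⟩⟩
                     · exact ⟨i, Or.inl ⟨rfl, rfl⟩⟩ } =
        Set.range (fun i => s((p i).1, (p i).2)) := by
      ext e
      induction e using Sym2.ind with
      | _ a b =>
        simp only [SimpleGraph.Subgraph.mem_edgeSet, Set.mem_range]
        constructor
        · rintro ⟨i, ⟨rfl, rfl⟩ | ⟨rfl, rfl⟩⟩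
          · exact ⟨i, rfl⟩
          · exact ⟨i, Sym2.eq_swap⟩
        · rintro ⟨i, hi⟩
          rw [Sym2.eq_iff] at hi
          rcases hi with ⟨rfl, rfl⟩ | ⟨rfl, rfl⟩
          · exact ⟨i, Or.inl ⟨rfl, rfl⟩⟩
          · exact ⟨i, Or.inr ⟨rfl, rfl⟩⟩
    rw [hset]
    have hinj : Function.Injective (fun i => s((p i).1, (p i).2)) := by
      intro i j hij
      simp only [Sym2.eq_iff] at hij
      by_contra hne
      rcases hij with ⟨h1, _⟩ | ⟨h1, h2⟩
      · exact (hdisj i j hne).1 h1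
      · exact (hdisj i j hne).2.1 h1
    rw [← Set.image_univ, Set.ncard_image_of_injective _ hinj, Set.ncard_univ,
      Nat.card_eq_fintype_card, Fintype.card_fin]
  · refine ⟨H.connectedComponentMk (p ⟨0, hk⟩).1, ?_⟩
    rintro v (⟨i, rfl⟩ | ⟨i, rfl⟩)
    · exact ConnectedComponent.sound (hconn i ⟨0, hk⟩)
    · exact ConnectedComponent.sound ((hadj i).symm.reachable.trans (hconn i ⟨0, hk⟩))

private lemma main_lemma (q : ℕ) (hq : 0 < q)
    (R B : SimpleGraph (Fin (4 * q) ⊕ Fin (4 * q)))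
    (hR : ∀ a b, R.Adj a b ↔ ∃ x y : Fin (4 * q),
      ((a = .inl x ∧ b = .inr y) ∨ (a = .inr y ∧ b = .inl x)) ∧
      ((x.val / q < 2 ∧ 2 ≤ y.val / q) ∨ (2 ≤ x.val / q ∧ y.val / q < 2)))
    (hB : ∀ a b, B.Adj a b ↔ ∃ x y : Fin (4 * q),
      ((a = .inl x ∧ b = .inr y) ∨ (a = .inr y ∧ b = .inl x)) ∧
      x.val / q = y.val / q) :
    ConnMatching R (2 * q) ∧ ¬ ConnMatching R (2 * q + 1) ∧
    ConnMatching B q ∧ ¬ ConnMatching B (q + 1) := by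
  have hdivlt : ∀ a : ℕ, a / q < 2 ↔ a < 2 * q := by
    intro a; rw [Nat.div_lt_iff_lt_mul hq, Nat.mul_comm]
  have hdivle : ∀ a : ℕ, 2 ≤ a / q ↔ 2 * q ≤ a := by
    intro a; rw [Nat.le_div_iff_mul_le hq]
  have hinstV : Nonempty (Fin (4 * q)) := ⟨⟨0, by omega⟩⟩
  refine ⟨?_, ?_, ?_, ?_⟩
  · -- red matching of size 2q
    refine connMatching_of (by omega)
      (fun i : Fin (2 * q) => (Sum.inl ⟨i.val, by omega⟩, Sum.inr ⟨i.val + 2 * q, by omega⟩))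
      ?_ ?_ ?_
    · intro i
      rw [hR]
      exact ⟨_, _, Or.inl ⟨rfl, rfl⟩, Or.inl ⟨(hdivlt _).mpr (by simp only [Fin.val_mk]; omega),
        (hdivle _).mpr (by simp only [Fin.val_mk]; omega)⟩⟩
    · intro i j hij
      have : i.val ≠ j.val := fun h => hij (Fin.ext h)
      refine ⟨?_, ?_, ?_, ?_⟩ <;>
        simp only [ne_eq, Sum.inl.injEq, Sum.inr.injEq, Fin.mk.injEq, reduceCtorEq,
          not_false_eq_true] <;> omega
    · intro i j
      have h1 : R.Adj (Sum.inl ⟨i.val, by omega⟩) (Sum.inr ⟨2 * q, by omega⟩) := by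
        rw [hR]
        exact ⟨_, _, Or.inl ⟨rfl, rfl⟩, Or.inl ⟨(hdivlt _).mpr (by simp only [Fin.val_mk]; omega),
          (hdivle _).mpr (by simp only [Fin.val_mk]; omega)⟩⟩
      have h2 : R.Adj (Sum.inl ⟨j.val, by omega⟩) (Sum.inr ⟨2 * q, by omega⟩) := by
        rw [hR]
        exact ⟨_, _, Or.inl ⟨rfl, rfl⟩, Or.inl ⟨(hdivlt _).mpr (by simp only [Fin.val_mk]; omega),
          (hdivle _).mpr (by simp only [Fin.val_mk]; omega)⟩⟩
      exact h1.reachable.trans h2.reachable.symm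
  · -- no red matching of size 2q+1
    rintro ⟨M, hM, hcard, c, hc⟩
    have hcross : ∀ a b, R.Adj a b → ∃ x y, (a = Sum.inl x ∧ b = Sum.inr y) ∨
        (a = Sum.inr y ∧ b = Sum.inl x) := by
      intro a b hab
      obtain ⟨x, y, h, _⟩ := (hR a b).mp hab
      exact ⟨x, y, h⟩
    -- find some vertex inl x0 in M
    have hne : M.edgeSet.Nonempty := Set.nonempty_of_ncard_ne_zero (by omega)
    obtain ⟨e0, he0⟩ := hne
    obtain ⟨x0, hx0⟩ : ∃ x0 : Fin (4 * q), Sum.inl x0 ∈ M.verts := by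
      induction e0 using Sym2.ind with
      | _ a b =>
        rw [SimpleGraph.Subgraph.mem_edgeSet] at he0
        obtain ⟨x, y, hxy | hxy⟩ := hcross a b (M.adj_sub he0)
        · exact ⟨x, M.edge_vert (hxy.1 ▸ hxy.2 ▸ he0)⟩
        · exact ⟨x, M.edge_vert (hxy.1 ▸ hxy.2 ▸ he0).symm⟩
    set σ : (Fin (4 * q) ⊕ Fin (4 * q)) → Prop :=
      Sum.elim (fun x => x.val < 2 * q) (fun y => 2 * q ≤ y.val) with hσdef
    have hσ : ∀ a b, R.Adj a b → σ a = σ b := by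
      intro a b hab
      obtain ⟨x, y, hor, hcond⟩ := (hR a b).mp hab
      rw [hdivlt, hdivle, hdivle, hdivlt] at hcond
      rcases hor with ⟨rfl, rfl⟩ | ⟨rfl, rfl⟩ <;>
        rcases hcond with ⟨h1, h2⟩ | ⟨h1, h2⟩ <;>
        simp only [hσdef, Sum.elim_inl, Sum.elim_inr, eq_iff_iff] <;> omega
    set T : Set (Fin (4 * q)) := {x | (x.val < 2 * q) ↔ (x0.val < 2 * q)} with hTdef
    have hbound : M.edgeSet.ncard ≤ T.ncard := by
      refine matching_le M hM hcross T (Set.toFinite T) ?_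
      intro x y hadj
      have hvx : Sum.inl x ∈ M.verts := M.edge_vert hadj
      have hreach : R.Reachable (Sum.inl x) (Sum.inl x0) :=
        ConnectedComponent.exact ((hc _ hvx).trans (hc _ hx0).symm)
      have := sigma_const R σ hσ hreach
      simp only [hσdef, Sum.elim_inl, eq_iff_iff] at this
      exact this
    have hT : T.ncard = 2 * q := by
      by_cases h0 : x0.val < 2 * q
      · have : T = Set.range (fun i : Fin (2 * q) => (⟨i.val, by omega⟩ : Fin (4 * q))) := by
          ext x
          simp only [hTdef, Set.mem_setOf_eq, Set.mem_range]
          constructor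
          · intro hx
            exact ⟨⟨x.val, hx.mpr h0⟩, rfl⟩
          · rintro ⟨i, rfl⟩
            simp only [Fin.val_mk]
            exact iff_of_true i.isLt h0
        rw [this, ← Set.image_univ, Set.ncard_image_of_injective _
          (fun i j h => Fin.ext (by simpa [Fin.mk.injEq] using h)),
          Set.ncard_univ, Nat.card_eq_fintype_card, Fintype.card_fin]
      · have : T = Set.range (fun i : Fin (2 * q) =>
            (⟨i.val + 2 * q, by omega⟩ : Fin (4 * q))) := by
          ext x
          simp only [hTdef, Set.mem_setOf_eq, Set.mem_range]
          constructor
          · intro hx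
            have hxge : 2 * q ≤ x.val := by
              by_contra hlt
              exact h0 (hx.mp (by omega))
            refine ⟨⟨x.val - 2 * q, by omega⟩, Fin.ext ?_⟩
            simp; omega
          · rintro ⟨i, rfl⟩
            simp only [Fin.val_mk] at *
            constructor <;> intro h <;> omega
        rw [this, ← Set.image_univ, Set.ncard_image_of_injective _
          (fun i j h => Fin.ext (by simpa [Fin.mk.injEq] using h)),
          Set.ncard_univ, Nat.card_eq_fintype_card, Fintype.card_fin]
    omega
  · -- blue matching of size q
    refine connMatching_of hq
      (fun i : Fin q => (Sum.inl ⟨i.val, by omega⟩, Sum.inr ⟨i.val, by omega⟩)) ?_ ?_ ?_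
    · intro i
      rw [hB]
      exact ⟨_, _, Or.inl ⟨rfl, rfl⟩, rfl⟩
    · intro i j hij
      have : i.val ≠ j.val := fun h => hij (Fin.ext h)
      refine ⟨?_, ?_, ?_, ?_⟩ <;>
        simp only [ne_eq, Sum.inl.injEq, Sum.inr.injEq, Fin.mk.injEq, reduceCtorEq,
          not_false_eq_true] <;> omega
    · intro i j
      have key : ∀ i : Fin q, B.Adj (Sum.inl ⟨i.val, by omega⟩) (Sum.inr ⟨0, by omega⟩) := by
        intro i
        rw [hB]
        refine ⟨_, _, Or.inl ⟨rfl, rfl⟩, ?_⟩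
        simp only [Fin.val_mk]
        rw [Nat.div_eq_of_lt i.isLt, Nat.zero_div]
      exact (key i).reachable.trans (key j).reachable.symm
  · -- no blue matching of size q+1
    rintro ⟨M, hM, hcard, c, hc⟩
    have hcross : ∀ a b, B.Adj a b → ∃ x y, (a = Sum.inl x ∧ b = Sum.inr y) ∨
        (a = Sum.inr y ∧ b = Sum.inl x) := by
      intro a b hab
      obtain ⟨x, y, h, _⟩ := (hB a b).mp hab
      exact ⟨x, y, h⟩
    have hne : M.edgeSet.Nonempty := Set.nonempty_of_ncard_ne_zero (by omega)
    obtain ⟨e0, he0⟩ := hne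
    obtain ⟨x0, hx0⟩ : ∃ x0 : Fin (4 * q), Sum.inl x0 ∈ M.verts := by
      induction e0 using Sym2.ind with
      | _ a b =>
        rw [SimpleGraph.Subgraph.mem_edgeSet] at he0
        obtain ⟨x, y, hxy | hxy⟩ := hcross a b (M.adj_sub he0)
        · exact ⟨x, M.edge_vert (hxy.1 ▸ hxy.2 ▸ he0)⟩
        · exact ⟨x, M.edge_vert (hxy.1 ▸ hxy.2 ▸ he0).symm⟩
    set σ : (Fin (4 * q) ⊕ Fin (4 * q)) → ℕ :=
      Sum.elim (fun x => x.val / q) (fun y => y.val / q) with hσdef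
    have hσ : ∀ a b, B.Adj a b → σ a = σ b := by
      intro a b hab
      obtain ⟨x, y, hor, hcond⟩ := (hB a b).mp hab
      rcases hor with ⟨rfl, rfl⟩ | ⟨rfl, rfl⟩ <;>
        simp only [hσdef, Sum.elim_inl, Sum.elim_inr] <;> omega
    set d : ℕ := x0.val / q with hddef
    have hd : d ≤ 3 := by
      have : x0.val / q < 4 := by
        rw [Nat.div_lt_iff_lt_mul hq]
        have := x0.isLt
        omega
      omega
    have hqd : q * d + q ≤ 4 * q := by
      have : q * d ≤ q * 3 := Nat.mul_le_mul_left q hd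
      omega
    set T : Set (Fin (4 * q)) := {x | x.val / q = d} with hTdef
    have hbound : M.edgeSet.ncard ≤ T.ncard := by
      refine matching_le M hM hcross T (Set.toFinite T) ?_
      intro x y hadj
      have hvx : Sum.inl x ∈ M.verts := M.edge_vert hadj
      have hreach : B.Reachable (Sum.inl x) (Sum.inl x0) :=
        ConnectedComponent.exact ((hc _ hvx).trans (hc _ hx0).symm)
      have := sigma_const B σ hσ hreach
      exact (by simpa only [hσdef, Sum.elim_inl] using this : x.val / q = x0.val / q)
    have hmem : ∀ a : ℕ, a / q = d ↔ q * d ≤ a ∧ a < q * d + q := by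
      intro a
      constructor
      · intro h
        have h1 := Nat.div_add_mod a q
        have h2 := Nat.mod_lt a hq
        rw [h] at h1
        omega
      · intro ⟨h1, h2⟩
        have h1' : d * q ≤ a := by rw [Nat.mul_comm]; exact h1
        have h2' : a < (d + 1) * q := by rw [Nat.add_mul, Nat.one_mul, Nat.mul_comm d q]; exact h2
        have hle : d ≤ a / q := (Nat.le_div_iff_mul_le hq).mpr h1'
        have hlt : a / q < d + 1 := (Nat.div_lt_iff_lt_mul hq).mpr h2'
        omega
    have hT : T.ncard = q := by
      have : T = Set.range (fun i : Fin q => (⟨q * d + i.val, by omega⟩ : Fin (4 * q))) := by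
        ext x
        simp only [hTdef, Set.mem_setOf_eq, Set.mem_range]
        rw [hmem]
        constructor
        · intro ⟨h1, h2⟩
          refine ⟨⟨x.val - q * d, by omega⟩, Fin.ext ?_⟩
          simp; omega
        · rintro ⟨i, rfl⟩
          have := i.isLt
          simp only [Fin.val_mk]
          omega
      rw [this, ← Set.image_univ, Set.ncard_image_of_injective _
        (fun i j h => Fin.ext (by simpa [Fin.mk.injEq] using h)),
        Set.ncard_univ, Nat.card_eq_fintype_card, Fintype.card_fin]
    omega

theorem stmt_7 (m n q : ℕ) (hq : 0 < q) (hnm : n < m) (hm3n : m < 3 * n)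
    (h4 : m + n - 1 = 4 * q)
    (R B : SimpleGraph (Fin (m + n - 1) ⊕ Fin (m + n - 1)))
    (hR : ∀ a b, R.Adj a b ↔ ∃ x y : Fin (m + n - 1),
      ((a = .inl x ∧ b = .inr y) ∨ (a = .inr y ∧ b = .inl x)) ∧
      ((x.val / q < 2 ∧ 2 ≤ y.val / q) ∨ (2 ≤ x.val / q ∧ y.val / q < 2)))
    (hB : ∀ a b, B.Adj a b ↔ ∃ x y : Fin (m + n - 1),
      ((a = .inl x ∧ b = .inr y) ∨ (a = .inr y ∧ b = .inl x)) ∧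
      x.val / q = y.val / q) :
    ConnMatching R (2 * q) ∧ ¬ ConnMatching R (2 * q + 1) ∧
    ConnMatching B q ∧ ¬ ConnMatching B (q + 1) := by
  revert R B
  rw [h4]
  exact main_lemma q hq
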